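/- Let f : X₁ × … × X_n → ℝ be 1-Lipschitz with respect to each coordinate (changing one coordinate changes f by at most 1), let μ be a product measure, and let B ⊆ X with μ(B) > 0 be a set where f = 0. Then E_μ[f] ≤ √((n/2)·ln(1/μ(B))). -/

import Mathlib

open Finset

open Real

lemma Dpos (p : ℝ) (hp0 : 0 ≤ p) (hp1 : p ≤ 1) (h : ℝ) :
    0 < 1 - p + p * Real.exp h := by
  rcases eq_or_lt_of_le hp1 with rfl | hlt
  · simpa using Real.exp_pos h
  · have := mul_nonneg hp0 (Real.exp_pos h).le
    linarith

lemma hoeffding_key (p : ℝ) (hp0 : 0 ≤ p) (hp1 : p ≤ 1) (t : ℝ) :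
    Real.log (1 - p + p * Real.exp t) ≤ p * t + t ^ 2 / 8 := by
  set φ : ℝ → ℝ := fun h => p * h + h ^ 2 / 8 - Real.log (1 - p + p * Real.exp h) with hφ
  set φ' : ℝ → ℝ := fun h => p + h / 4 - p * Real.exp h / (1 - p + p * Real.exp h) with hφ'
  have hD : ∀ h, HasDerivAt (fun h => 1 - p + p * Real.exp h) (p * Real.exp h) h := by
    intro h
    simpa using (((Real.hasDerivAt_exp h).const_mul p).const_add (1 - p))
  have hd1 : ∀ h, HasDerivAt φ (φ' h) h := by
    intro h
    have hlog : HasDerivAt (fun h => Real.log (1 - p + p * Real.exp h))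
        (p * Real.exp h / (1 - p + p * Real.exp h)) h := (hD h).log (Dpos p hp0 hp1 h).ne'
    have h2 : HasDerivAt (fun h : ℝ => p * h) p h := by
      simpa using (hasDerivAt_id h).const_mul p
    have base := (h2.add ((hasDerivAt_pow 2 h).div_const 8)).sub hlog
    refine base.congr_deriv ?_
    push_cast
    ring
  have hd2 : ∀ h, HasDerivAt φ'
      (1 / 4 - p * (1 - p) * Real.exp h / (1 - p + p * Real.exp h) ^ 2) h := by
    intro h
    have hq : HasDerivAt (fun h => p * Real.exp h / (1 - p + p * Real.exp h))
        ((p * Real.exp h * (1 - p + p * Real.exp h) - p * Real.exp h * (p * Real.exp h)) /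
          (1 - p + p * Real.exp h) ^ 2) h :=
      ((Real.hasDerivAt_exp h).const_mul p).div (hD h) (Dpos p hp0 hp1 h).ne'
    have h1 : HasDerivAt (fun h : ℝ => p + h / 4) (1 / 4) h := by
      simpa using ((hasDerivAt_id h).div_const 4).const_add p
    have := h1.sub hq
    refine this.congr_deriv ?_
    have hDne := (Dpos p hp0 hp1 h).ne'
    field_simp
    ring
  have hd2nn : ∀ h, 0 ≤ 1 / 4 - p * (1 - p) * Real.exp h / (1 - p + p * Real.exp h) ^ 2 := by
    intro h
    rw [sub_nonneg, div_le_iff₀ (pow_pos (Dpos p hp0 hp1 h) 2)]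
    nlinarith [sq_nonneg ((1 - p) - p * Real.exp h), Real.exp_pos h]
  have hφ'0 : φ' 0 = 0 := by
    simp only [hφ', Real.exp_zero, mul_one]
    have : 1 - p + p = 1 := by ring
    rw [this]
    ring
  have hφ'mono : Monotone φ' := by
    have : ∀ h, 0 ≤ deriv φ' h := by
      intro h; rw [(hd2 h).deriv]; exact hd2nn h
    exact monotone_of_deriv_nonneg (fun h => (hd2 h).differentiableAt) this
  have hφ0 : φ 0 = 0 := by
    simp only [hφ, Real.exp_zero, mul_one]
    have : 1 - p + p = 1 := by ring
    rw [this, Real.log_one]; ring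
  have hφcont : Continuous φ := by
    have : Differentiable ℝ φ := fun x => (hd1 x).differentiableAt
    exact this.continuous
  have hmain : 0 ≤ φ t := by
    rcases le_total 0 t with ht | ht
    · have hmono : MonotoneOn φ (Set.Ici 0) := by
        apply monotoneOn_of_deriv_nonneg (convex_Ici 0) hφcont.continuousOn
        · intro x _; exact (hd1 x).differentiableAt.differentiableWithinAt
        · intro x hx
          rw [(hd1 x).deriv]
          have h0 : φ' 0 ≤ φ' x := hφ'mono (le_of_lt (by simpa using hx))
          linarith [hφ'0 ▸ h0]
      have := hmono (Set.mem_Ici.2 le_rfl) (Set.mem_Ici.2 ht) ht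
      linarith [hφ0 ▸ this]
    · have hanti : AntitoneOn φ (Set.Iic 0) := by
        apply antitoneOn_of_deriv_nonpos (convex_Iic 0) hφcont.continuousOn
        · intro x _; exact (hd1 x).differentiableAt.differentiableWithinAt
        · intro x hx
          rw [(hd1 x).deriv]
          have h0 : φ' x ≤ φ' 0 := hφ'mono (le_of_lt (by simpa using hx))
          linarith [hφ'0 ▸ h0]
      have := hanti (Set.mem_Iic.2 ht) (Set.mem_Iic.2 le_rfl) ht
      linarith [hφ0 ▸ this]
  have h2 : 0 ≤ p * t + t ^ 2 / 8 - Real.log (1 - p + p * Real.exp t) := hmain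
  linarith

open Finset

lemma hoeffding_discrete {α : Type*} [Fintype α] [Nonempty α]
    (q : α → ℝ) (hq0 : ∀ a, 0 ≤ q a) (hq1 : ∑ a, q a = 1)
    (v : α → ℝ) (hv : ∀ a b, |v a - v b| ≤ 1) (t : ℝ) :
    ∑ a, q a * Real.exp (t * ((∑ b, q b * v b) - v a)) ≤ Real.exp (t ^ 2 / 8) := by
  have hne : (univ : Finset α).Nonempty := univ_nonempty
  set c : ℝ := univ.inf' hne v with hc
  have hcv : ∀ a, c ≤ v a := fun a => inf'_le v (mem_univ a)
  have hvc : ∀ a, v a ≤ c + 1 := by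
    intro a
    obtain ⟨b, -, hb⟩ := exists_mem_eq_inf' hne v
    have := abs_le.1 (hv a b)
    rw [hc, hb]
    linarith [this.2]
  set m : ℝ := ∑ b, q b * v b with hm
  set s : ℝ := m - c with hs
  have hsum_c : ∑ b, q b * c = c := by rw [← Finset.sum_mul, hq1, one_mul]
  have hs0 : 0 ≤ s := by
    have : ∑ b, q b * c ≤ ∑ b, q b * v b :=
      Finset.sum_le_sum fun b _ => mul_le_mul_of_nonneg_left (hcv b) (hq0 b)
    rw [hs, hm, sub_nonneg, ← hsum_c]; exact this
  have hs1 : s ≤ 1 := by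
    have : ∑ b, q b * v b ≤ ∑ b, q b * (c + 1) :=
      Finset.sum_le_sum fun b _ => mul_le_mul_of_nonneg_left (hvc b) (hq0 b)
    have h2 : ∑ b, q b * (c + 1) = c + 1 := by
      rw [← Finset.sum_mul, hq1, one_mul]
    rw [hs]; rw [hm]; linarith [h2 ▸ this]
  -- pointwise convexity bound
  have hpt : ∀ a, Real.exp (t * (m - v a)) ≤
      Real.exp (t * s) * ((1 - (v a - c)) + (v a - c) * Real.exp (-t)) := by
    intro a
    set u : ℝ := v a - c with hu
    have hu0 : 0 ≤ u := by simp [hu, sub_nonneg, hcv a]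
    have hu1 : u ≤ 1 := by have := hvc a; simp [hu]; linarith
    have hconv := convexOn_exp.2 (Set.mem_univ (0:ℝ)) (Set.mem_univ (-t))
      (by linarith : (0:ℝ) ≤ 1 - u) hu0 (by ring)
    simp only [smul_eq_mul, mul_zero, zero_add, Real.exp_zero, mul_one] at hconv
    have key : Real.exp (u * -t) ≤ (1 - u) + u * Real.exp (-t) := hconv
    have : t * (m - v a) = t * s + u * (-t) := by rw [hs, hu]; ring
    rw [this, Real.exp_add]
    exact mul_le_mul_of_nonneg_left key (Real.exp_pos _).le
  calc ∑ a, q a * Real.exp (t * (m - v a))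
      ≤ ∑ a, q a * (Real.exp (t * s) * ((1 - (v a - c)) + (v a - c) * Real.exp (-t))) :=
        Finset.sum_le_sum fun a _ => mul_le_mul_of_nonneg_left (hpt a) (hq0 a)
    _ = Real.exp (t * s) * ((1 - s) + s * Real.exp (-t)) := by
        have hqs : ∑ a, q a * (v a - c) = s := by
          simp only [mul_sub]
          rw [Finset.sum_sub_distrib, hsum_c, hs, hm]
        rw [Finset.sum_congr rfl (fun a _ => by ring :
          ∀ a ∈ univ, q a * (Real.exp (t * s) * ((1 - (v a - c)) + (v a - c) * Real.exp (-t))) =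
            Real.exp (t * s) * (q a * ((1 - (v a - c)) + (v a - c) * Real.exp (-t)))),
          ← Finset.mul_sum]
        congr 1
        have expand : ∑ a, q a * ((1 - (v a - c)) + (v a - c) * Real.exp (-t)) =
            (∑ a, q a) - (∑ a, q a * (v a - c)) + (∑ a, q a * (v a - c)) * Real.exp (-t) := by
          rw [Finset.sum_mul, ← Finset.sum_sub_distrib, ← Finset.sum_add_distrib]
          exact Finset.sum_congr rfl fun a _ => by ring
        rw [expand, hq1, hqs]
    _ ≤ Real.exp (t ^ 2 / 8) := by
        have hpos := Dpos s hs0 hs1 (-t)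
        have hk := hoeffding_key s hs0 hs1 (-t)
        have : (1 - s) + s * Real.exp (-t) = Real.exp (Real.log (1 - s + s * Real.exp (-t))) := by
          rw [Real.exp_log hpos]
        rw [this, ← Real.exp_add]
        apply Real.exp_le_exp.2
        have : (-t) ^ 2 = t ^ 2 := by ring
        linarith [this ▸ hk]

universe u

open Finset in
theorem mgf_bound (n : ℕ) : ∀ (X : Fin n → Type u) [∀ i, Fintype (X i)]
    [∀ i, DecidableEq (X i)] [∀ i, Nonempty (X i)]
    (p : ∀ i, X i → ℝ) (_hp0 : ∀ i a, 0 ≤ p i a) (_hp1 : ∀ i, ∑ a, p i a = 1)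
    (f : (∀ j, X j) → ℝ)
    (_hlip : ∀ (i : Fin n) (x : ∀ j, X j) (a : X i),
      |f (Function.update x i a) - f x| ≤ 1) (t : ℝ),
    ∑ x : ∀ j, X j, (∏ i, p i (x i)) *
        Real.exp (t * ((∑ y : ∀ j, X j, (∏ i, p i (y i)) * f y) - f x))
      ≤ Real.exp (t ^ 2 * n / 8) := by
  induction n with
  | zero =>
    intro X _ _ _ p hp0 hp1 f hlip t
    simp
  | succ n ih =>
    intro X _ _ _ p hp0 hp1 f hlip t
    set g : (∀ i : Fin n, X i.succ) → ℝ := fun y => ∑ a : X 0, p 0 a * f (Fin.cons a y) with hg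
    have hsum : ∀ F : (∀ j, X j) → ℝ,
        ∑ x : ∀ j, X j, F x = ∑ a : X 0, ∑ y : ∀ i : Fin n, X i.succ, F (Fin.cons a y) := by
      intro F
      rw [← Equiv.sum_comp (Fin.consEquiv X) F, Fintype.sum_prod_type]
      rfl
    have hprod : ∀ (a : X 0) (y : ∀ i : Fin n, X i.succ),
        (∏ i, p i (Fin.cons a y i)) = p 0 a * ∏ i, p i.succ (y i) := by
      intro a y
      rw [Fin.prod_univ_succ]
      simp
    have hμy : ∀ y : ∀ i : Fin n, X i.succ, 0 ≤ ∏ i, p i.succ (y i) :=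
      fun y => Finset.prod_nonneg fun i _ => hp0 i.succ (y i)
    set m : ℝ := ∑ x : ∀ j, X j, (∏ i, p i (x i)) * f x with hm
    have hmg : m = ∑ y : ∀ i : Fin n, X i.succ, (∏ i, p i.succ (y i)) * g y := by
      rw [hm, hsum (fun x => (∏ i, p i (x i)) * f x), Finset.sum_comm]
      apply Finset.sum_congr rfl
      intro y _
      rw [hg]
      simp only
      rw [Finset.mul_sum]
      apply Finset.sum_congr rfl
      intro a _
      rw [hprod]
      ring
    have hlipg : ∀ (i : Fin n) (y : ∀ j : Fin n, X j.succ) (b : X i.succ),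
        |g (Function.update y i b) - g y| ≤ 1 := by
      intro i y b
      rw [hg]
      simp only
      rw [← Finset.sum_sub_distrib]
      calc |∑ a : X 0, (p 0 a * f (Fin.cons a (Function.update y i b)) - p 0 a * f (Fin.cons a y))|
          ≤ ∑ a : X 0, |p 0 a * f (Fin.cons a (Function.update y i b)) - p 0 a * f (Fin.cons a y)| :=
            Finset.abs_sum_le_sum_abs _ _
        _ ≤ ∑ a : X 0, p 0 a := by
            apply Finset.sum_le_sum
            intro a _
            rw [← mul_sub, abs_mul, abs_of_nonneg (hp0 0 a)]
            have hc : Fin.cons a (Function.update y i b) =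
                Function.update (Fin.cons a y) i.succ b := Fin.cons_update a y i b
            have h2 := hlip i.succ (Fin.cons a y) b
            rw [← hc] at h2
            calc p 0 a * |f (Fin.cons a (Function.update y i b)) - f (Fin.cons a y)| ≤
                p 0 a * 1 := mul_le_mul_of_nonneg_left h2 (hp0 0 a)
              _ = p 0 a := mul_one _
        _ = 1 := hp1 0
    have hinner : ∀ y : ∀ i : Fin n, X i.succ,
        ∑ a : X 0, p 0 a * Real.exp (t * (g y - f (Fin.cons a y))) ≤ Real.exp (t ^ 2 / 8) := by
      intro y
      have h := hoeffding_discrete (p 0) (hp0 0) (hp1 0) (fun a => f (Fin.cons a y))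
        (by
          intro a b
          have h := hlip 0 (Fin.cons b y) a
          rwa [Fin.update_cons_zero] at h) t
      rw [hg]
      exact h
    calc ∑ x : ∀ j, X j, (∏ i, p i (x i)) * Real.exp (t * (m - f x))
        = ∑ a : X 0, ∑ y : ∀ i : Fin n, X i.succ,
            (p 0 a * ∏ i, p i.succ (y i)) * Real.exp (t * (m - f (Fin.cons a y))) := by
          rw [hsum (fun x => (∏ i, p i (x i)) * Real.exp (t * (m - f x)))]
          exact Finset.sum_congr rfl fun a _ => Finset.sum_congr rfl fun y _ => by rw [hprod]
      _ = ∑ y : ∀ i : Fin n, X i.succ, ((∏ i, p i.succ (y i)) * Real.exp (t * (m - g y))) *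
            ∑ a : X 0, p 0 a * Real.exp (t * (g y - f (Fin.cons a y))) := by
          rw [Finset.sum_comm]
          apply Finset.sum_congr rfl
          intro y _
          rw [Finset.mul_sum]
          apply Finset.sum_congr rfl
          intro a _
          have hsplit : t * (m - f (Fin.cons a y)) =
              t * (m - g y) + t * (g y - f (Fin.cons a y)) := by ring
          rw [hsplit, Real.exp_add]
          ring
      _ ≤ ∑ y : ∀ i : Fin n, X i.succ, ((∏ i, p i.succ (y i)) * Real.exp (t * (m - g y))) * Real.exp (t ^ 2 / 8) := by
          apply Finset.sum_le_sum
          intro y _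
          exact mul_le_mul_of_nonneg_left (hinner y)
            (mul_nonneg (hμy y) (Real.exp_pos _).le)
      _ = Real.exp (t ^ 2 / 8) * ∑ y : ∀ i : Fin n, X i.succ, (∏ i, p i.succ (y i)) *
            Real.exp (t * ((∑ z : ∀ i : Fin n, X i.succ, (∏ i, p i.succ (z i)) * g z) - g y)) := by
          rw [← Finset.sum_mul, mul_comm, hmg]
      _ ≤ Real.exp (t ^ 2 / 8) * Real.exp (t ^ 2 * n / 8) := by
          apply mul_le_mul_of_nonneg_left _ (Real.exp_pos _).le
          exact ih (fun i => X i.succ) (fun i => p i.succ) (fun i a => hp0 i.succ a) (fun i => hp1 i.succ) g hlipg t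
      _ = Real.exp (t ^ 2 * (n + 1 : ℕ) / 8) := by
          rw [← Real.exp_add]
          congr 1
          push_cast
          ring


/-- Application of McDiarmid's inequality: if `f` is 1-Lipschitz in each
coordinate with respect to a product measure and vanishes on a set `B` of
positive measure, then `E f ≤ √((n/2)·ln(1/μ B))`. -/
theorem expectation_le_of_vanishing_on_set {n : ℕ} (X : Fin n → Type*)
    [∀ i, Fintype (X i)] [∀ i, DecidableEq (X i)]
    (p : ∀ i, X i → ℝ) (hp_nonneg : ∀ i a, 0 ≤ p i a)
    (hp_sum : ∀ i, ∑ a, p i a = 1)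
    (f : (∀ j, X j) → ℝ)
    (hlip : ∀ (i : Fin n) (x : ∀ j, X j) (a : X i),
      |f (Function.update x i a) - f x| ≤ 1)
    (B : Finset (∀ j, X j)) (hf0 : ∀ x ∈ B, f x = 0)
    (μB : ℝ) (hμB : μB = ∑ x ∈ B, ∏ i, p i (x i)) (hμBpos : 0 < μB) :
    ∑ x : ∀ j, X j, (∏ i, p i (x i)) * f x ≤
      Real.sqrt ((n / 2) * Real.log (1 / μB)) := by
  have hBne : B.Nonempty := by
    by_contra h
    rw [Finset.not_nonempty_iff_eq_empty] at h
    rw [h, Finset.sum_empty] at hμB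
    exact absurd hμB hμBpos.ne'
  obtain ⟨x₀, hx₀⟩ := hBne
  haveI : ∀ i, Nonempty (X i) := fun i => ⟨x₀ i⟩
  set m : ℝ := ∑ x : ∀ j, X j, (∏ i, p i (x i)) * f x with hm
  have hμx : ∀ x : ∀ j, X j, 0 ≤ ∏ i, p i (x i) :=
    fun x => Finset.prod_nonneg fun i _ => hp_nonneg i (x i)
  have hmgf := mgf_bound n X p hp_nonneg hp_sum f hlip
  -- key exponential bound
  have key : ∀ t : ℝ, t * m + Real.log μB ≤ t ^ 2 * n / 8 := by
    intro t
    have h1 : μB * Real.exp (t * m) = ∑ x ∈ B, (∏ i, p i (x i)) * Real.exp (t * (m - f x)) := by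
      rw [hμB, Finset.sum_mul]
      apply Finset.sum_congr rfl
      intro x hx
      rw [hf0 x hx]
      ring_nf
    have h2 : ∑ x ∈ B, (∏ i, p i (x i)) * Real.exp (t * (m - f x)) ≤
        ∑ x : ∀ j, X j, (∏ i, p i (x i)) * Real.exp (t * (m - f x)) :=
      Finset.sum_le_sum_of_subset_of_nonneg (Finset.subset_univ B)
        (fun x _ _ => mul_nonneg (hμx x) (Real.exp_pos _).le)
    have h3 := hmgf t
    have h4 : μB * Real.exp (t * m) ≤ Real.exp (t ^ 2 * n / 8) := by
      rw [h1]; exact le_trans h2 h3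
    have h5 := Real.log_le_log (by positivity) h4
    rwa [Real.log_mul hμBpos.ne' (Real.exp_pos _).ne', Real.log_exp, Real.log_exp,
      add_comm] at h5
  have hL : Real.log (1 / μB) = -Real.log μB := by
    rw [one_div, Real.log_inv]
  rcases le_or_gt m 0 with hm0 | hm0
  · exact le_trans hm0 (Real.sqrt_nonneg _)
  · rcases Nat.eq_zero_or_pos n with hn | hn
    · exfalso
      have hk := key ((-Real.log μB + 1) / m)
      rw [hn] at hk
      have : (-Real.log μB + 1) / m * m = -Real.log μB + 1 := by
        field_simp
      rw [this] at hk
      simp at hk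
      linarith
    · have hn0 : (0 : ℝ) < n := by exact_mod_cast hn
      have hk := key (4 * m / n)
      have e1 : 4 * m / ↑n * m = 4 * m ^ 2 / ↑n := by ring
      have e2 : (4 * m / ↑n) ^ 2 * ↑n / 8 = 2 * m ^ 2 / ↑n := by
        field_simp
        ring
      rw [e1, e2] at hk
      have hk2 : 2 * m ^ 2 / ↑n ≤ -Real.log μB := by
        have e3 : 4 * m ^ 2 / ↑n = 2 * (2 * m ^ 2 / ↑n) := by ring
        linarith
      have hk3 : 2 * m ^ 2 ≤ ↑n * (-Real.log μB) := by
        rw [div_le_iff₀ hn0] at hk2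
        linarith
      have hsq : m ^ 2 ≤ (n / 2) * Real.log (1 / μB) := by
        rw [hL]
        linarith
      rw [show m = √(m ^ 2) by rw [Real.sqrt_sq hm0.le]]
      exact Real.sqrt_le_sqrt hsq
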